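/- arXiv:0910.4770 — 2 statements merged into one kernel-verified Lean document; each statement's English description precedes it below -/
import Mathlib

section
/- Let n ≥ q ≥ 1 and 0 ≤ s ≤ n−q be integers, and let w(n,q,s) : ℝ^{q−1} × ℝ^{n−q} × ℝ → ℝ^{q−1} × ℝ be the standard wrinkle, w(n,q,s)(y, x, z) = (y, z³ + 3(‖y‖² − 1)z − ∑_{i=1}^{s} x_i² + ∑_{j=s+1}^{n−q} x_j²). Then the Fréchet derivative of w(n,q,s) at a point (y, x, z) is surjective if and only if it is not the case that x = 0 and ‖y‖² + z² = 1. Consequently, the singular set of w(n,q,s) is exactly {(y, 0, z) : ‖y‖² + z² = 1}. -/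
set_option maxHeartbeats 1000000 in
private lemma hasFDerivAt_sq' {E : Type*} [NormedAddCommGroup E] [NormedSpace ℝ E]
    {f : E → ℝ} {f' : E →L[ℝ] ℝ} {x : E} (hf : HasFDerivAt f f' x) :
    HasFDerivAt (fun y => f y ^ 2) ((2 * f x) • f') x := by
  have h := hf.mul hf
  have e1 : (fun y => f y ^ 2) = fun y => f y * f y := by funext y; ring
  have e2 : (2 * f x) • f' = f x • f' + f x • f' := by rw [two_mul, add_smul]
  rw [e1, e2]; exact h

set_option maxHeartbeats 1000000 in
private lemma hasFDerivAt_cube' {E : Type*} [NormedAddCommGroup E] [NormedSpace ℝ E]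
    {f : E → ℝ} {f' : E →L[ℝ] ℝ} {x : E} (hf : HasFDerivAt f f' x) :
    HasFDerivAt (fun y => f y ^ 3) ((3 * f x ^ 2) • f') x := by
  have h := (hasFDerivAt_sq' hf).mul hf
  have e1 : (fun y => f y ^ 3) = fun y => f y ^ 2 * f y := by funext y; ring
  have e2 : (3 * f x ^ 2) • f' = f x ^ 2 • f' + f x • (2 * f x) • f' := by
    ext v; simp [smul_smul]; ring
  rw [e1, e2]; exact h

set_option maxHeartbeats 2000000 in
/-- For the standard wrinkle
`w(n,q,s)(y, x, z) = (y, z³ + 3(‖y‖² − 1)z − ∑_{i≤s} x_i² + ∑_{j>s} x_j²)`,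
the Fréchet derivative at `(y, x, z)` is surjective if and only if it is not the case
that `x = 0` and `‖y‖² + z² = 1`.  Consequently the singular set of `w(n,q,s)` is
exactly `{(y, 0, z) : ‖y‖² + z² = 1}`. -/
theorem standard_wrinkle_singular_set (n q s : ℕ)
    (hq : 1 ≤ q) (hnq : q ≤ n) (hs : s ≤ n - q)
    (w : (Fin (q - 1) → ℝ) × (Fin (n - q) → ℝ) × ℝ → (Fin (q - 1) → ℝ) × ℝ)
    (hw : ∀ (y : Fin (q - 1) → ℝ) (x : Fin (n - q) → ℝ) (z : ℝ),
      w (y, x, z) =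
        (y, z ^ 3 + 3 * ((∑ j : Fin (q - 1), (y j) ^ 2) - 1) * z +
          ∑ j : Fin (n - q), (if (j : ℕ) < s then (-1 : ℝ) else 1) * (x j) ^ 2)) :
    (∀ (y : Fin (q - 1) → ℝ) (x : Fin (n - q) → ℝ) (z : ℝ),
      Function.Surjective (fderiv ℝ w (y, x, z)) ↔
        ¬ (x = 0 ∧ (∑ j : Fin (q - 1), (y j) ^ 2) + z ^ 2 = 1)) ∧
    {p : (Fin (q - 1) → ℝ) × (Fin (n - q) → ℝ) × ℝ |
        ¬ Function.Surjective (fderiv ℝ w p)} =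
      {p | p.2.1 = 0 ∧ (∑ j : Fin (q - 1), (p.1 j) ^ 2) + p.2.2 ^ 2 = 1} := by
  have hweq : w = fun p => (p.1,
      p.2.2 ^ 3 + 3 * ((∑ j : Fin (q - 1), (p.1 j) ^ 2) - 1) * p.2.2 +
      ∑ j : Fin (n - q), (if (j : ℕ) < s then (-1 : ℝ) else 1) * (p.2.1 j) ^ 2) := by
    funext p; obtain ⟨a, b, c⟩ := p; exact hw a b c
  subst hweq
  set E := (Fin (q - 1) → ℝ) × (Fin (n - q) → ℝ) × ℝ with hE
  have key : ∀ (y : Fin (q - 1) → ℝ) (x : Fin (n - q) → ℝ) (z : ℝ),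
      Function.Surjective (fderiv ℝ
        (fun p : E => (p.1,
          p.2.2 ^ 3 + 3 * ((∑ j : Fin (q - 1), (p.1 j) ^ 2) - 1) * p.2.2 +
          ∑ j : Fin (n - q), (if (j : ℕ) < s then (-1 : ℝ) else 1) * (p.2.1 j) ^ 2))
        (y, x, z)) ↔
      ¬ (x = 0 ∧ (∑ j : Fin (q - 1), (y j) ^ 2) + z ^ 2 = 1) := by
    intro y x z
    let Pz : E →L[ℝ] ℝ :=
      (ContinuousLinearMap.snd ℝ (Fin (n - q) → ℝ) ℝ).comp
        (ContinuousLinearMap.snd ℝ (Fin (q - 1) → ℝ) ((Fin (n - q) → ℝ) × ℝ))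
    let Py : Fin (q - 1) → (E →L[ℝ] ℝ) := fun j =>
      (ContinuousLinearMap.proj j).comp
        (ContinuousLinearMap.fst ℝ (Fin (q - 1) → ℝ) ((Fin (n - q) → ℝ) × ℝ))
    let Px : Fin (n - q) → (E →L[ℝ] ℝ) := fun j =>
      (ContinuousLinearMap.proj j).comp
        ((ContinuousLinearMap.fst ℝ (Fin (n - q) → ℝ) ℝ).comp
          (ContinuousLinearMap.snd ℝ (Fin (q - 1) → ℝ) ((Fin (n - q) → ℝ) × ℝ)))
    have hz : HasFDerivAt (fun p : E => p.2.2) Pz (y, x, z) := Pz.hasFDerivAt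
    have hyj : ∀ j : Fin (q - 1), HasFDerivAt (fun p : E => p.1 j) (Py j) (y, x, z) :=
      fun j => (Py j).hasFDerivAt
    have hxj : ∀ j : Fin (n - q), HasFDerivAt (fun p : E => p.2.1 j) (Px j) (y, x, z) :=
      fun j => (Px j).hasFDerivAt
    have hS : HasFDerivAt (fun p : E => ∑ j : Fin (q - 1), (p.1 j) ^ 2)
        (∑ j : Fin (q - 1), (2 * y j) • Py j) (y, x, z) :=
      HasFDerivAt.fun_sum fun j _ => hasFDerivAt_sq' (hyj j)
    have hX : HasFDerivAt
        (fun p : E => ∑ j : Fin (n - q), (if (j : ℕ) < s then (-1 : ℝ) else 1) * (p.2.1 j) ^ 2)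
        (∑ j : Fin (n - q), (if (j : ℕ) < s then (-1 : ℝ) else 1) • (2 * x j) • Px j)
        (y, x, z) :=
      HasFDerivAt.fun_sum fun j _ => (hasFDerivAt_sq' (hxj j)).const_mul _
    have hA : HasFDerivAt (fun p : E => 3 * ((∑ j : Fin (q - 1), (p.1 j) ^ 2) - 1))
        ((3:ℝ) • (∑ j : Fin (q - 1), (2 * y j) • Py j)) (y, x, z) :=
      (hS.sub_const 1).const_mul 3
    set D : E →L[ℝ] ℝ := ((3 * z ^ 2) • Pz +
        ((3 * ((∑ j : Fin (q - 1), (y j) ^ 2) - 1)) • Pz +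
          z • ((3:ℝ) • (∑ j : Fin (q - 1), (2 * y j) • Py j)))) +
        ∑ j : Fin (n - q), (if (j : ℕ) < s then (-1 : ℝ) else 1) • (2 * x j) • Px j with hD
    have hww : HasFDerivAt
        (fun p : E => (p.1,
          p.2.2 ^ 3 + 3 * ((∑ j : Fin (q - 1), (p.1 j) ^ 2) - 1) * p.2.2 +
          ∑ j : Fin (n - q), (if (j : ℕ) < s then (-1 : ℝ) else 1) * (p.2.1 j) ^ 2))
        ((ContinuousLinearMap.fst ℝ (Fin (q - 1) → ℝ) ((Fin (n - q) → ℝ) × ℝ)).prod D)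
        (y, x, z) :=
      HasFDerivAt.prodMk hasFDerivAt_fst (((hasFDerivAt_cube' hz).add (hA.mul hz)).add hX)
    have heval : ∀ v : E, D v =
        3 * z ^ 2 * v.2.2 +
          (3 * ((∑ j : Fin (q - 1), (y j) ^ 2) - 1) * v.2.2 +
            z * (3 * ∑ j : Fin (q - 1), 2 * y j * v.1 j)) +
          ∑ j : Fin (n - q), (if (j : ℕ) < s then (-1 : ℝ) else 1) * (2 * x j * v.2.1 j) := by
      intro v
      simp only [hD, ContinuousLinearMap.add_apply, ContinuousLinearMap.smul_apply,
        ContinuousLinearMap.coe_comp', Function.comp_apply, ContinuousLinearMap.coe_snd',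
        ContinuousLinearMap.coe_fst', ContinuousLinearMap.proj_apply,
        ContinuousLinearMap.sum_apply, smul_eq_mul, Pz, Py, Px]
      rfl
    have hL : ∀ v : E,
        ((ContinuousLinearMap.fst ℝ (Fin (q - 1) → ℝ) ((Fin (n - q) → ℝ) × ℝ)).prod D) v =
          (v.1, D v) := fun v => rfl
    rw [hww.fderiv]
    set S := ∑ j : Fin (q - 1), (y j) ^ 2 with hSdef
    constructor
    · intro hsurj
      rintro ⟨hx0, h1⟩
      subst hx0
      obtain ⟨v, hv⟩ := hsurj (0, 1)
      rw [hL v, Prod.ext_iff] at hv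
      obtain ⟨hv1, hv2⟩ := hv
      have hv1' : v.1 = 0 := hv1
      rw [heval v] at hv2
      simp only [hv1', Pi.zero_apply, mul_zero, zero_mul, add_zero,
        Finset.sum_const_zero] at hv2
      have hS1 : S - 1 = -z ^ 2 := by linarith
      rw [hS1] at hv2
      nlinarith [hv2]
    · intro hns
      rintro ⟨a, b⟩
      by_cases hx : x = 0
      · have h1 : S + z ^ 2 ≠ 1 := fun h => hns ⟨hx, h⟩
        have hα : (3 * z ^ 2 + 3 * (S - 1)) ≠ 0 := by
          intro h; apply h1; nlinarith
        refine ⟨(a, 0, (b - z * (3 * ∑ j : Fin (q - 1), 2 * y j * a j)) /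
            (3 * z ^ 2 + 3 * (S - 1))), ?_⟩
        rw [hL, Prod.ext_iff]
        refine ⟨rfl, ?_⟩
        rw [heval]
        simp only [Pi.zero_apply, mul_zero, add_zero, Finset.sum_const_zero]
        have ht : (3 * z ^ 2 + 3 * (S - 1)) * ((b - z * (3 * ∑ j : Fin (q - 1), 2 * y j * a j)) /
            (3 * z ^ 2 + 3 * (S - 1))) = b - z * (3 * ∑ j : Fin (q - 1), 2 * y j * a j) := by
          exact mul_div_cancel₀ _ hα
        linear_combination ht
      · obtain ⟨j, hj⟩ := Function.ne_iff.mp hx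
        have hj' : x j ≠ 0 := by simpa using hj
        have hcj : (if (j : ℕ) < s then (-1 : ℝ) else 1) ≠ 0 := by split <;> norm_num
        refine ⟨(a, Pi.single j ((b - z * (3 * ∑ i : Fin (q - 1), 2 * y i * a i)) /
            ((if (j : ℕ) < s then (-1 : ℝ) else 1) * (2 * x j))), 0), ?_⟩
        rw [hL, Prod.ext_iff]
        refine ⟨rfl, ?_⟩
        rw [heval]
        simp only [Pi.single_apply, mul_ite, mul_zero, ite_mul, zero_mul,
          Finset.sum_ite_eq', Finset.mem_univ, if_true]
        split_ifs with hjs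
        · field_simp
          ring
        · field_simp
          ring
  refine ⟨key, ?_⟩
  ext ⟨y, x, z⟩
  simp only [Set.mem_setOf_eq]
  rw [key y x z, not_not]
end

section
/- Let n ≥ q ≥ 1 and 0 ≤ s ≤ n−q be integers. Define the family of maps H : [0,1] × (ℝ^{q−1} × ℝ^{n−q} × ℝ) → ℝ^{q−1} × ℝ by H(t, (y, x, z)) = (y, z³ + 3(‖y‖² − 1 + 2t)z − ∑_{i=1}^{s} x_i² + ∑_{j=s+1}^{n−q} x_j²). Then H is continuous, H(0, ·) equals the standard wrinkle w(n,q,s), and the map H(1, ·) is a submersion: its Fréchet derivative is surjective at every point. Hence the standard wrinkle w(n,q,s) is homotopic to a submersion. -/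
/-- The family `H(t, (y, x, z)) = (y, z³ + 3(‖y‖² − 1 + 2t)z − ∑_{i≤s} x_i² + ∑_{j>s} x_j²)`
is continuous, equals the standard wrinkle `w(n,q,s)` at `t = 0`, and at `t = 1` is a
submersion (surjective Fréchet derivative at every point).  Hence the standard wrinkle
is homotopic to a submersion. -/
theorem standard_wrinkle_homotopic_to_submersion (n q s : ℕ)
    (hq : 1 ≤ q) (hnq : q ≤ n) (hs : s ≤ n - q)
    (w : (Fin (q - 1) → ℝ) × (Fin (n - q) → ℝ) × ℝ → (Fin (q - 1) → ℝ) × ℝ)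
    (hw : ∀ (y : Fin (q - 1) → ℝ) (x : Fin (n - q) → ℝ) (z : ℝ),
      w (y, x, z) =
        (y, z ^ 3 + 3 * ((∑ j : Fin (q - 1), (y j) ^ 2) - 1) * z +
          ∑ j : Fin (n - q), (if (j : ℕ) < s then (-1 : ℝ) else 1) * (x j) ^ 2))
    (H : ℝ × ((Fin (q - 1) → ℝ) × (Fin (n - q) → ℝ) × ℝ) → (Fin (q - 1) → ℝ) × ℝ)
    (hH : ∀ (t : ℝ) (y : Fin (q - 1) → ℝ) (x : Fin (n - q) → ℝ) (z : ℝ),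
      H (t, (y, x, z)) =
        (y, z ^ 3 + 3 * ((∑ j : Fin (q - 1), (y j) ^ 2) - 1 + 2 * t) * z +
          ∑ j : Fin (n - q), (if (j : ℕ) < s then (-1 : ℝ) else 1) * (x j) ^ 2)) :
    Continuous H ∧ (∀ p, H (0, p) = w p) ∧
    (∀ p, Function.Surjective (fderiv ℝ (fun p' => H (1, p')) p)) := by
  refine ⟨?_, ?_, ?_⟩
  · have hHeq : H = fun r : ℝ × ((Fin (q - 1) → ℝ) × (Fin (n - q) → ℝ) × ℝ) =>
        (r.2.1, r.2.2.2 ^ 3 + 3 * ((∑ j : Fin (q - 1), (r.2.1 j) ^ 2) - 1 + 2 * r.1) * r.2.2.2 +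
          ∑ j : Fin (n - q), (if (j : ℕ) < s then (-1 : ℝ) else 1) * (r.2.2.1 j) ^ 2) := by
      funext r
      obtain ⟨t, y, x, z⟩ := r
      exact hH t y x z
    rw [hHeq]
    fun_prop
  · rintro ⟨y, x, z⟩
    rw [hH, hw]
    norm_num
  · rintro ⟨y, x, z⟩
    set f : (Fin (q - 1) → ℝ) × (Fin (n - q) → ℝ) × ℝ → ℝ :=
      fun r => r.2.2 ^ 3 + 3 * ((∑ j : Fin (q - 1), (r.1 j) ^ 2) - 1 + 2 * 1) * r.2.2 +
        ∑ j : Fin (n - q), (if (j : ℕ) < s then (-1 : ℝ) else 1) * (r.2.1 j) ^ 2 with hf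
    have hG : (fun p' => H (1, p')) = fun r => (r.1, f r) := by
      funext r
      obtain ⟨y, x, z⟩ := r
      rw [hH]
    have hdf : Differentiable ℝ f := by
      rw [hf]; fun_prop
    have hD : HasFDerivAt (fun r : (Fin (q - 1) → ℝ) × (Fin (n - q) → ℝ) × ℝ => (r.1, f r))
        ((ContinuousLinearMap.fst ℝ _ _).prod (fderiv ℝ f (y, x, z))) (y, x, z) :=
      HasFDerivAt.prodMk (hasFDerivAt_fst) (hdf (y, x, z)).hasFDerivAt
    rw [hG, hD.fderiv]
    rintro ⟨a, b⟩
    set D₂ := fderiv ℝ f (y, x, z) with hD₂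
    set A : ℝ := 3 * ((∑ j : Fin (q - 1), (y j) ^ 2) - 1 + 2 * 1) with hA
    set Q : ℝ := ∑ j : Fin (n - q), (if (j : ℕ) < s then (-1 : ℝ) else 1) * (x j) ^ 2 with hQ
    -- the curve t ↦ (y, x, z + t)
    have hc : HasDerivAt (fun t : ℝ => ((y, x, z + t) :
        (Fin (q - 1) → ℝ) × (Fin (n - q) → ℝ) × ℝ)) (0, 0, 1) 0 :=
      HasDerivAt.prodMk (hasDerivAt_const (0:ℝ) y) (HasDerivAt.prodMk (hasDerivAt_const (0:ℝ) x) ((hasDerivAt_id (0:ℝ)).const_add z))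
    have hcomp : HasDerivAt (fun t : ℝ => f (y, x, z + t)) (D₂ (0, 0, 1)) 0 := by
      have := (hdf (y, x, z + 0)).hasFDerivAt.comp_hasDerivAt 0 hc
      simp only [add_zero] at this
      exact this
    have h1 : HasDerivAt (fun t : ℝ => z + t) 1 0 := (hasDerivAt_id 0).const_add z
    have hφ : HasDerivAt (fun t : ℝ => (z + t) ^ 3 + A * (z + t) + Q)
        ((3 : ℕ) * (z + 0) ^ (3 - 1) * 1 + A * 1) 0 :=
      ((h1.pow 3).add (h1.const_mul A)).add_const Q
    have hval : D₂ (0, 0, 1) = 3 * z ^ 2 + A := by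
      have heq : (fun t : ℝ => f (y, x, z + t)) =
          fun t : ℝ => (z + t) ^ 3 + A * (z + t) + Q := by
        funext t; rw [hf]
      rw [heq] at hcomp
      have := hcomp.unique hφ
      rw [this]; push_cast; ring
    have hd_pos : 0 < 3 * z ^ 2 + A := by
      have hS : 0 ≤ ∑ j : Fin (q - 1), (y j) ^ 2 :=
        Finset.sum_nonneg fun j _ => sq_nonneg _
      have : 0 ≤ 3 * z ^ 2 := by positivity
      rw [hA]; nlinarith
    set d : ℝ := 3 * z ^ 2 + A with hd
    set t0 : ℝ := (b - D₂ (a, 0, 0)) / d with ht0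
    refine ⟨(a, 0, t0), ?_⟩
    have hsplit : ((a, 0, t0) : (Fin (q - 1) → ℝ) × (Fin (n - q) → ℝ) × ℝ)
        = (a, 0, 0) + t0 • (0, 0, 1) := by
      simp [Prod.ext_iff]
    have hD2v : D₂ (a, 0, t0) = D₂ (a, 0, 0) + t0 * d := by
      rw [hsplit, map_add, map_smul, hval, smul_eq_mul, hd]
    have happ : ((ContinuousLinearMap.fst ℝ (Fin (q - 1) → ℝ)
        ((Fin (n - q) → ℝ) × ℝ)).prod D₂) (a, 0, t0) = (a, D₂ (a, 0, t0)) := rfl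
    rw [happ, hD2v, ht0]
    have hdne : d ≠ 0 := ne_of_gt hd_pos
    rw [Prod.ext_iff]
    constructor
    · rfl
    · field_simp
      ring
end
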